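/- Let L be a real Lie algebra, J : L → L linear with J² = -id, D ⊆ L a J-stable Lie subalgebra (J(D) ⊆ D, [D,D] ⊆ D) such that (L_Z J)(X) = [Z,JX] - J[Z,X] ∈ D for all Z ∈ D, X ∈ L, and such that Im N^J ⊆ D. Then T⁺ + Dℂ ⊆ Lℂ is closed under the bracket, where T⁺ = {X - iJX : X ∈ L}. -/
import Mathlib

open TensorProduct

/-- Inclusion of a real vector space into its complexification. -/
noncomputable def incl {L : Type*} [AddCommGroup L] [Module ℝ L] (x : L) : ℂ ⊗[ℝ] L :=
  (1 : ℂ) ⊗ₜ[ℝ] x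

/-- `A⁺(X) = ½(X - iJX)` in the complexification. -/
noncomputable def Ap {L : Type*} [AddCommGroup L] [Module ℝ L] (J : L →ₗ[ℝ] L) (x : L) :
    ℂ ⊗[ℝ] L :=
  (1 / 2 : ℂ) • (incl x - Complex.I • incl (J x))

/-- `A⁻(X) = ½(X + iJX)` in the complexification. -/
noncomputable def Am {L : Type*} [AddCommGroup L] [Module ℝ L] (J : L →ₗ[ℝ] L) (x : L) :
    ℂ ⊗[ℝ] L :=
  (1 / 2 : ℂ) • (incl x + Complex.I • incl (J x))

lemma incl_add {L : Type*} [AddCommGroup L] [Module ℝ L] (x y : L) :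
    incl (x + y) = incl x + incl y := TensorProduct.tmul_add _ _ _

lemma incl_sub {L : Type*} [AddCommGroup L] [Module ℝ L] (x y : L) :
    incl (x - y) = incl x - incl y := by
  simp [incl, TensorProduct.tmul_sub]

lemma lie_incl {L : Type*} [LieRing L] [LieAlgebra ℝ L] (x y : L) :
    ⁅incl x, incl y⁆ = incl ⁅x, y⁆ := by
  show ⁅(1:ℂ) ⊗ₜ[ℝ] x, (1:ℂ) ⊗ₜ[ℝ] y⁆ = _
  rw [LieAlgebra.ExtendScalars.bracket_tmul, mul_one]
  rfl

lemma smul_lie' {L : Type*} [LieRing L] [LieAlgebra ℝ L] (c : ℂ) (a b : ℂ ⊗[ℝ] L) :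
    ⁅c • a, b⁆ = c • ⁅a, b⁆ := smul_lie c a b

lemma lie_smul' {L : Type*} [LieRing L] [LieAlgebra ℝ L] (c : ℂ) (a b : ℂ ⊗[ℝ] L) :
    ⁅a, c • b⁆ = c • ⁅a, b⁆ := lie_smul c a b

lemma lie_add' {L : Type*} [LieRing L] [LieAlgebra ℝ L] (a b c : ℂ ⊗[ℝ] L) :
    ⁅a, b + c⁆ = ⁅a, b⁆ + ⁅a, c⁆ := lie_add a b c

lemma add_lie' {L : Type*} [LieRing L] [LieAlgebra ℝ L] (a b c : ℂ ⊗[ℝ] L) :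
    ⁅a + b, c⁆ = ⁅a, c⁆ + ⁅b, c⁆ := add_lie a b c

lemma zero_lie' {L : Type*} [LieRing L] [LieAlgebra ℝ L] (a : ℂ ⊗[ℝ] L) :
    ⁅(0 : ℂ ⊗[ℝ] L), a⁆ = 0 := zero_lie a

lemma lie_zero' {L : Type*} [LieRing L] [LieAlgebra ℝ L] (a : ℂ ⊗[ℝ] L) :
    ⁅a, (0 : ℂ ⊗[ℝ] L)⁆ = 0 := lie_zero a

/-- If `D ⊆ L` is a `J`-stable subalgebra, stable under all operators `L_Z J` for `Z ∈ D`,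
and containing the image of the Nijenhuis torsion `N^J`, then `T⁺ + Dℂ` is closed under
the bracket in the complexification. -/
theorem transverse_complex_involutive (L : Type*) [LieRing L] [LieAlgebra ℝ L]
    (J : L →ₗ[ℝ] L) (hJ : ∀ X, J (J X) = -X)
    (N : L → L → L)
    (hN : ∀ X Y, N X Y = ⁅J X, J Y⁆ - J ⁅J X, Y⁆ - J ⁅X, J Y⁆ - ⁅X, Y⁆)
    (D : Submodule ℝ L)
    (hDJ : ∀ x ∈ D, J x ∈ D)
    (hDD : ∀ x ∈ D, ∀ y ∈ D, ⁅x, y⁆ ∈ D)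
    (hDLJ : ∀ Z ∈ D, ∀ X : L, ⁅Z, J X⁆ - J ⁅Z, X⁆ ∈ D)
    (hDN : ∀ X Y : L, N X Y ∈ D)
    (S : Submodule ℂ (ℂ ⊗[ℝ] L))
    (hS : S = Submodule.span ℂ {z : ℂ ⊗[ℝ] L | ∃ X : L, z = incl X - Complex.I • incl (J X)} ⊔
        Submodule.span ℂ (incl '' (D : Set L))) :
    ∀ a ∈ S, ∀ b ∈ S, ⁅a, b⁆ ∈ S := by
  set_option maxHeartbeats 1000000 in
  set t : L → ℂ ⊗[ℝ] L := fun X => incl X - Complex.I • incl (J X) with ht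
  set G : Set (ℂ ⊗[ℝ] L) :=
    {z : ℂ ⊗[ℝ] L | ∃ X : L, z = incl X - Complex.I • incl (J X)} ∪ incl '' (D : Set L) with hG
  have hST : S = Submodule.span ℂ G := by rw [hS, hG, Submodule.span_union]
  -- generator membership
  have htS : ∀ X : L, t X ∈ S := fun X =>
    hST ▸ Submodule.subset_span (Or.inl ⟨X, rfl⟩)
  have hdS : ∀ d ∈ D, incl d ∈ S := fun d hd =>
    hST ▸ Submodule.subset_span (Or.inr ⟨d, hd, rfl⟩)
  -- key bracket computations
  have eq1 : ∀ X Y : L,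
      ⁅t X, t Y⁆ = t (⁅X, Y⁆ - ⁅J X, J Y⁆) - Complex.I • incl (J (N X Y)) := by
    intro X Y
    have hL1 : J (⁅X, Y⁆ - ⁅J X, J Y⁆) + J (N X Y) = ⁅X, J Y⁆ + ⁅J X, Y⁆ := by
      rw [hN]
      simp only [map_sub, hJ]
      abel
    have h2 : Complex.I • incl (J (⁅X, Y⁆ - ⁅J X, J Y⁆)) + Complex.I • incl (J (N X Y))
        = Complex.I • incl ⁅X, J Y⁆ + Complex.I • incl ⁅J X, Y⁆ := by
      rw [← smul_add, ← smul_add, ← incl_add, ← incl_add, hL1]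
    simp only [ht, lie_sub, sub_lie, lie_smul', smul_lie', lie_incl, smul_smul,
      Complex.I_mul_I, neg_one_smul, incl_sub]
    linear_combination (norm := module) h2
  have eq2 : ∀ (X : L) (z : L),
      ⁅t X, incl z⁆ = t ⁅X, z⁆ + Complex.I • incl (⁅z, J X⁆ - J ⁅z, X⁆) := by
    intro X z
    have hL2 : ⁅z, J X⁆ - J ⁅z, X⁆ = J ⁅X, z⁆ - ⁅J X, z⁆ := by
      rw [← lie_skew z X, map_neg, ← lie_skew z (J X)]
      abel
    rw [hL2]
    simp only [ht, sub_lie, smul_lie', lie_incl, incl_sub]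
    module
  -- closure on generators
  have key : ∀ a ∈ G, ∀ b ∈ G, ⁅a, b⁆ ∈ S := by
    rintro a (⟨X, rfl⟩ | ⟨x, hx, rfl⟩) b (⟨Y, rfl⟩ | ⟨y, hy, rfl⟩)
    · rw [show incl X - Complex.I • incl (J X) = t X from rfl,
        show incl Y - Complex.I • incl (J Y) = t Y from rfl, eq1]
      exact sub_mem (htS _) (Submodule.smul_mem _ _ (hdS _ (hDJ _ (hDN X Y))))
    · rw [show incl X - Complex.I • incl (J X) = t X from rfl, eq2]
      exact add_mem (htS _) (Submodule.smul_mem _ _ (hdS _ (hDLJ y hy X)))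
    · show ⁅incl x, t Y⁆ ∈ S
      rw [← lie_skew (incl x) (t Y), eq2]
      exact neg_mem (add_mem (htS _) (Submodule.smul_mem _ _ (hdS _ (hDLJ x hx Y))))
    · rw [lie_incl]
      exact hdS _ (hDD x hx y hy)
  -- extend by bilinearity
  intro a ha b hb
  rw [hST] at ha hb
  induction ha, hb using Submodule.span_induction₂ with
  | mem_mem x y hx hy => exact key x hx y hy
  | zero_left y hy => rw [zero_lie']; exact zero_mem _
  | zero_right x hx => rw [lie_zero']; exact zero_mem _
  | add_left x y z hx hy hz h1 h2 => rw [add_lie']; exact add_mem h1 h2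
  | add_right x y z hx hy hz h1 h2 => rw [lie_add']; exact add_mem h1 h2
  | smul_left r x y hx hy h => rw [smul_lie']; exact Submodule.smul_mem _ _ h
  | smul_right r x y hx hy h => rw [lie_smul']; exact Submodule.smul_mem _ _ h
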